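/- Consider the joint pmf on ℕ^P proportional to exp(Σ_h (α_h x_h − log(x_h!)) − Σ_{g<h} β_{gh} F(x_g) F(x_h)) with F bounded. If β_{jl} = 0 for some pair j < l, then X_j and X_l are conditionally independent given the remaining coordinates: P(X_j = a, X_l = b | X_{−(j,l)}) = P(X_j = a | X_{−(j,l)}) · P(X_l = b | X_{−(j,l)}) for all a, b ∈ ℕ. -/

import Mathlib

open scoped BigOperators

noncomputable def nodeSum {P : ℕ} (α : Fin P → ℝ) (x : Fin P → ℕ) : ℝ :=
  ∑ j, (α j * (x j : ℝ) - Real.log (Nat.factorial (x j)))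

noncomputable def edgeSum {P : ℕ} (β : Fin P → Fin P → ℝ) (F : ℕ → ℝ) (x : Fin P → ℕ) : ℝ :=
  ∑ j, ∑ l, if j < l then β j l * F (x j) * F (x l) else 0

/-- Unnormalized weight of the pairwise MRF for counts. -/
noncomputable def w {P : ℕ} (α : Fin P → ℝ) (β : Fin P → Fin P → ℝ) (F : ℕ → ℝ)
    (x : Fin P → ℕ) : ℝ :=
  Real.exp (nodeSum α x - edgeSum β F x)

/-- Normalizing constant A(α,β). -/
noncomputable def Anorm {P : ℕ} (α : Fin P → ℝ) (β : Fin P → Fin P → ℝ) (F : ℕ → ℝ) : ℝ :=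
  ∑' x : Fin P → ℕ, w α β F x

/-- The transformation F(x) = (arctan x)^θ. -/
noncomputable def Fpow (θ : ℝ) : ℕ → ℝ := fun n => Real.arctan (n : ℝ) ^ θ

section Aux

variable {P : ℕ} (α : Fin P → ℝ) (β : Fin P → Fin P → ℝ) (F : ℕ → ℝ)

lemma w_pos (y : Fin P → ℕ) : 0 < w α β F y := Real.exp_pos _

lemma edge_abs_le (U : ℝ) (hF : ∀ x, |F x| ≤ U) (y : Fin P → ℕ) :
    |edgeSum β F y| ≤ ∑ g, ∑ h, |β g h| * (U * U) := by
  have hU : 0 ≤ U := le_trans (abs_nonneg _) (hF 0)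
  refine le_trans (Finset.abs_sum_le_sum_abs _ _) (Finset.sum_le_sum fun g _ => ?_)
  refine le_trans (Finset.abs_sum_le_sum_abs _ _) (Finset.sum_le_sum fun h _ => ?_)
  by_cases hgh : g < h
  · simp only [hgh, if_true]
    calc |β g h * F (y g) * F (y h)| = |β g h| * (|F (y g)| * |F (y h)|) := by
          rw [abs_mul, abs_mul, mul_assoc]
      _ ≤ |β g h| * (U * U) := by
          apply mul_le_mul_of_nonneg_left _ (abs_nonneg _)
          exact mul_le_mul (hF _) (hF _) (abs_nonneg _) hU
  · simp only [hgh, if_false, abs_zero]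
    positivity

lemma node_update (z : Fin P → ℕ) (i : Fin P) (m : ℕ) :
    nodeSum α (Function.update z i m)
      = nodeSum α z + ((α i * m - Real.log (Nat.factorial m))
        - (α i * (z i) - Real.log (Nat.factorial (z i)))) := by
  have : nodeSum α (Function.update z i m) - nodeSum α z
      = (α i * m - Real.log (Nat.factorial m))
        - (α i * (z i) - Real.log (Nat.factorial (z i))) := by
    unfold nodeSum
    rw [← Finset.sum_sub_distrib]
    rw [Finset.sum_eq_single i]
    · simp
    · intro k _ hk
      simp [Function.update_apply, hk]
    · simp
  linarith

lemma summable_w (U : ℝ) (hF : ∀ x, |F x| ≤ U) (z : Fin P → ℕ) (i : Fin P) :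
    Summable (fun m : ℕ => w α β F (Function.update z i m)) := by
  set M : ℝ := ∑ g, ∑ h, |β g h| * (U * U) with hM
  set C : ℝ := Real.exp (nodeSum α z - (α i * (z i) - Real.log (Nat.factorial (z i))) + M)
    with hC
  have hbound : ∀ m : ℕ, w α β F (Function.update z i m)
      ≤ C * (Real.exp (α i) ^ m / Nat.factorial m) := by
    intro m
    have h1 : w α β F (Function.update z i m)
        ≤ Real.exp (nodeSum α (Function.update z i m) + M) := by
      unfold w
      apply Real.exp_le_exp.2
      have h2 := edge_abs_le β F U hF (Function.update z i m)
      have h3 := neg_abs_le (edgeSum β F (Function.update z i m))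
      rw [← hM] at h2
      linarith
    have hfac : (0 : ℝ) < Nat.factorial m := by exact_mod_cast Nat.factorial_pos m
    have hexp : Real.exp (α i * m - Real.log (Nat.factorial m))
        = Real.exp (α i) ^ m / Nat.factorial m := by
      rw [Real.exp_sub, Real.exp_log hfac, mul_comm (α i) (m : ℝ), Real.exp_nat_mul]
    have h2 : Real.exp (nodeSum α (Function.update z i m) + M)
        = C * (Real.exp (α i) ^ m / Nat.factorial m) := by
      rw [node_update, hC, ← hexp, ← Real.exp_add]
      congr 1
      ring
    exact h1.trans_eq h2
  exact Summable.of_nonneg_of_le (fun m => (w_pos α β F _).le) hbound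
    (((Real.summable_pow_div_factorial (Real.exp (α i))).mul_left C))

end Aux

/-- Double coordinate update. -/
def upd2 {P : ℕ} (x : Fin P → ℕ) (j l : Fin P) (a b : ℕ) : Fin P → ℕ :=
  Function.update (Function.update x j a) l b

set_option maxHeartbeats 1000000 in
theorem stmt2 (P : ℕ) (α : Fin P → ℝ) (β : Fin P → Fin P → ℝ)
    (F : ℕ → ℝ) (U : ℝ) (hF : ∀ x, |F x| ≤ U)
    (j l : Fin P) (hjl : j ≠ l) (hβ : β j l = 0) (hβ' : β l j = 0)
    (x : Fin P → ℕ) (a b : ℕ) :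
    (fun y => w α β F y / Anorm α β F)
        (Function.update (Function.update x j a) l b) /
      (∑' ab : ℕ × ℕ, (fun y => w α β F y / Anorm α β F)
        (Function.update (Function.update x j ab.1) l ab.2))
    = ((∑' b' : ℕ, (fun y => w α β F y / Anorm α β F)
          (Function.update (Function.update x j a) l b')) /
        (∑' ab : ℕ × ℕ, (fun y => w α β F y / Anorm α β F)
          (Function.update (Function.update x j ab.1) l ab.2))) *
      ((∑' a' : ℕ, (fun y => w α β F y / Anorm α β F)
          (Function.update (Function.update x j a') l b)) /
        (∑' ab : ℕ × ℕ, (fun y => w α β F y / Anorm α β F)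
          (Function.update (Function.update x j ab.1) l ab.2))) := by
  simp only [div_eq_mul_inv]
  simp only [show ∀ a' b' : ℕ,
      Function.update (Function.update x j a') l b' = upd2 x j l a' b' from fun _ _ => rfl]
  set c : ℝ := (Anorm α β F)⁻¹ with hc
  have hUapply : ∀ a' b' k, upd2 x j l a' b' k
      = if k = l then b' else if k = j then a' else x k := by
    intro a' b' k
    simp [upd2, Function.update_apply]
  -- key factorization: w(a,b) * w(0,0) = w(a,0) * w(0,b)
  have key : ∀ a' b' : ℕ,
      w α β F (upd2 x j l a' b') * w α β F (upd2 x j l 0 0)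
        = w α β F (upd2 x j l a' 0) * w α β F (upd2 x j l 0 b') := by
    intro a' b'
    unfold w
    rw [← Real.exp_add, ← Real.exp_add]
    congr 1
    have hnode : nodeSum α (upd2 x j l a' b') + nodeSum α (upd2 x j l 0 0)
        = nodeSum α (upd2 x j l a' 0) + nodeSum α (upd2 x j l 0 b') := by
      unfold nodeSum
      rw [← Finset.sum_add_distrib, ← Finset.sum_add_distrib]
      apply Finset.sum_congr rfl
      intro k _
      rw [hUapply, hUapply, hUapply, hUapply]
      split_ifs <;> push_cast <;> ring
    have hedge : edgeSum β F (upd2 x j l a' b') + edgeSum β F (upd2 x j l 0 0)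
        = edgeSum β F (upd2 x j l a' 0) + edgeSum β F (upd2 x j l 0 b') := by
      unfold edgeSum
      rw [← Finset.sum_add_distrib, ← Finset.sum_add_distrib]
      apply Finset.sum_congr rfl
      intro g _
      rw [← Finset.sum_add_distrib, ← Finset.sum_add_distrib]
      apply Finset.sum_congr rfl
      intro h _
      by_cases hgh : g < h
      · simp only [hgh, if_true]
        rw [hUapply, hUapply, hUapply, hUapply, hUapply, hUapply, hUapply, hUapply]
        by_cases hgl : g = l <;> by_cases hhl : h = l <;>
          by_cases hgj : g = j <;> by_cases hhj : h = j <;>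
          first
            | exact absurd (hgl.symm.trans hgj).symm hjl
            | exact absurd (hhl.symm.trans hhj).symm hjl
            | (simp only [hgl, hhl, hgj, hhj, eq_self_iff_true, if_true, if_false,
                if_neg hjl, if_neg (Ne.symm hjl), hβ, hβ'] <;> ring)
      · simp [hgh]
    linarith
  -- the component functions
  set φ : ℕ → ℝ := fun a' => w α β F (upd2 x j l a' 0) with hφdef
  set ψ : ℕ → ℝ := fun b' => w α β F (upd2 x j l 0 b') with hψdef
  set K : ℝ := w α β F (upd2 x j l 0 0) with hK
  have hw00 : (0:ℝ) < K := w_pos α β F _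
  have hWfact : ∀ a' b' : ℕ, w α β F (upd2 x j l a' b') = φ a' * ψ b' / K := by
    intro a' b'
    rw [eq_div_iff hw00.ne']
    exact key a' b'
  -- summability
  have hφs : Summable φ := by
    have h1 : ∀ a' : ℕ, upd2 x j l a' 0 = Function.update (Function.update x l 0) j a' := by
      intro a'
      show Function.update (Function.update x j a') l 0 = _
      rw [Function.update_comm hjl]
    have h2 : φ = fun a' => w α β F (Function.update (Function.update x l 0) j a') := by
      funext a'; rw [hφdef]; simp only [h1]
    rw [h2]
    exact summable_w α β F U hF _ j
  have hψs : Summable ψ := summable_w α β F U hF (Function.update x j 0) l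
  have hφpos : ∀ a', 0 < φ a' := fun a' => w_pos α β F _
  have hψpos : ∀ b', 0 < ψ b' := fun b' => w_pos α β F _
  have hΦpos : 0 < ∑' a', φ a' := Summable.tsum_pos hφs (fun i => (hφpos i).le) 0 (hφpos 0)
  have hΨpos : 0 < ∑' b', ψ b' := Summable.tsum_pos hψs (fun i => (hψpos i).le) 0 (hψpos 0)
  set Φ := ∑' a', φ a' with hΦ
  set Ψ := ∑' b', ψ b' with hΨ
  have hfun : (fun p : ℕ × ℕ => w α β F (upd2 x j l p.1 p.2))
      = fun p : ℕ × ℕ => (φ p.1) * (ψ p.2 / K) := by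
    funext p
    rw [hWfact p.1 p.2]
    ring
  have hWs : Summable (fun p : ℕ × ℕ => (φ p.1) * (ψ p.2 / K)) :=
    Summable.mul_of_nonneg hφs (hψs.div_const K)
      (fun a' => (hφpos a').le) (fun b' => (div_nonneg (hψpos b').le hw00.le))
  -- compute the joint sum
  have hS : (∑' p : ℕ × ℕ, w α β F (upd2 x j l p.1 p.2)) = Φ * Ψ / K := by
    rw [hfun]
    rw [Summable.tsum_prod' hWs (fun a' => (hψs.div_const K).mul_left (φ a'))]
    calc (∑' a' : ℕ, ∑' b' : ℕ, φ a' * (ψ b' / K))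
        = ∑' a' : ℕ, φ a' * (Ψ / K) := by
          refine tsum_congr fun a' => ?_
          rw [tsum_mul_left, tsum_div_const]
      _ = Φ * (Ψ / K) := tsum_mul_right
      _ = Φ * Ψ / K := by ring
  have hSa : (∑' b' : ℕ, w α β F (upd2 x j l a b')) = φ a * Ψ / K := by
    have h2 : (fun b' : ℕ => w α β F (upd2 x j l a b'))
        = fun b' : ℕ => φ a * (ψ b' / K) := by
      funext b'; rw [hWfact a b']; ring
    rw [h2, tsum_mul_left, tsum_div_const]
    ring
  have hSb : (∑' a' : ℕ, w α β F (upd2 x j l a' b)) = Φ * ψ b / K := by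
    have h2 : (fun a' : ℕ => w α β F (upd2 x j l a' b))
        = fun a' : ℕ => (φ a' * (ψ b / K)) := by
      funext a'; rw [hWfact a' b]; ring
    rw [h2, tsum_mul_right, ← hΦ]
    ring
  -- pull the normalizing constant out
  rw [tsum_mul_right, tsum_mul_right, tsum_mul_right]
  rcases eq_or_ne c 0 with hc0 | hc0
  · simp [hc0]
  simp only [← div_eq_mul_inv]
  rw [mul_div_mul_right _ _ hc0, mul_div_mul_right _ _ hc0, mul_div_mul_right _ _ hc0]
  -- now the core identity
  rw [hS, hSa, hSb, hWfact a b]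
  have hKne : K ≠ 0 := hw00.ne'
  have hΦne : Φ ≠ 0 := hΦpos.ne'
  have hΨne : Ψ ≠ 0 := hΨpos.ne'
  field_simp
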